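/- Let F be a field, let d ≥ 1, and let M be a symmetric d×d matrix over F. For θ ∈ F let ψ(θ) denote the row vector (1, θ, θ², …, θ^{d−1}). Let θ₁, …, θ_d be d pairwise distinct elements of F and let θ_f ∈ F. If ψ(θ_i) · M · ψ(θ_f)ᵀ = 0 for all i = 1, …, d, then ψ(θ_f) · M = 0. -/

import Mathlib

/-- Node-repair property of the Product-Matrix MBR code: if the `d` repair
symbols `ψ(θ_i)·M·ψ(θ_f)ᵀ` sent by helper nodes at `d` pairwise distinct
evaluation points all vanish, then the content `ψ(θ_f)·M` of the failed node
vanishes, where `M` is symmetric and `ψ(θ) = (1, θ, …, θ^{d−1})`. -/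
theorem pm_mbr_repair
    (F : Type*) [Field F] (d : ℕ) (hd : 1 ≤ d)
    (M : Matrix (Fin d) (Fin d) F) (hM : M.IsSymm)
    (θ : Fin d → F) (hθ : Function.Injective θ) (θf : F)
    (h : ∀ i : Fin d,
      dotProduct (fun j : Fin d => θ i ^ (j : ℕ))
        (M.mulVec (fun j : Fin d => θf ^ (j : ℕ))) = 0) :
    Matrix.vecMul (fun j : Fin d => θf ^ (j : ℕ)) M = 0 := by
  set ψ : Fin d → F := fun j : Fin d => θf ^ (j : ℕ)
  set v : Fin d → F := M.mulVec ψ with hv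
  have hdet : (Matrix.vandermonde θ).det ≠ 0 := by
    rw [Matrix.det_vandermonde]
    refine Finset.prod_ne_zero_iff.2 fun i _ => Finset.prod_ne_zero_iff.2 fun j hj => ?_
    exact sub_ne_zero_of_ne fun e => (Finset.mem_Ioi.1 hj).ne' (hθ e)
  have hmul : (Matrix.vandermonde θ).mulVec v = 0 := by
    funext i
    simpa [Matrix.mulVec, Matrix.vandermonde, dotProduct] using h i
  have hv0 : v = 0 :=
    ((Matrix.mulVec_injective_iff_isUnit.2 (Matrix.isUnit_iff_isUnit_det _ |>.2
      hdet.isUnit)).eq_iff' (Matrix.mulVec_zero _)).1 hmul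
  have : Matrix.vecMul ψ M = M.mulVec ψ := by
    conv_lhs => rw [← hM.eq, Matrix.vecMul_transpose]
  rw [this]; exact hv0
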